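/- Let R be a commutative ring and M a nonzero multiplication R-module. Then the Jacobson radical of M (the intersection of all maximal submodules of M) equals (⋂ {P maximal ideal of R : P • M ≠ M}) • M. -/

import Mathlib

/-- `M` is a multiplication `R`-module if every submodule `N` of `M` has the form
`N = I • M` for some ideal `I` of `R`. -/
def IsMultiplicationModule (R : Type*) [CommRing R] (M : Type*) [AddCommGroup M]
    [Module R M] : Prop :=
  ∀ N : Submodule R M, ∃ I : Ideal R, N = I • (⊤ : Submodule R M)

/-- Every maximal (coatom) submodule of a multiplication module has the form `P • ⊤`
for the maximal ideal `P = (N : ⊤)`. -/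
lemma coatom_eq_colon_smul {R : Type*} [CommRing R] {M : Type*} [AddCommGroup M]
    [Module R M] (hM : IsMultiplicationModule R M) {N : Submodule R M} (hN : IsCoatom N) :
    (N.colon ⊤).IsMaximal ∧ (N.colon ⊤) • (⊤ : Submodule R M) = N := by
  have hsimple : IsSimpleModule R (M ⧸ N) := isSimpleModule_iff_isCoatom.mpr hN
  have hmax : (N.colon ⊤).IsMaximal := by
    rw [show (⊤ : Set M) = Set.univ from rfl, ← Submodule.annihilator_quotient]
    exact IsSimpleModule.annihilator_isMaximal
  refine ⟨hmax, le_antisymm ?_ ?_⟩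
  · rw [Submodule.smul_le]
    intro r hr m _
    exact Submodule.mem_colon.mp hr m trivial
  · obtain ⟨I, hI⟩ := hM N
    have hIle : I ≤ N.colon ⊤ := by
      intro r hr
      refine Submodule.mem_colon.mpr fun m _ => ?_
      rw [hI]
      exact Submodule.smul_mem_smul hr trivial
    calc N = I • ⊤ := hI
      _ ≤ (N.colon ⊤) • ⊤ := Submodule.smul_mono_left hIle

/-- If `P` is a maximal ideal with `P • ⊤ ≠ ⊤`, then `P • ⊤` is a maximal submodule. -/
lemma isCoatom_smul_top {R : Type*} [CommRing R] {M : Type*} [AddCommGroup M]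
    [Module R M] (hM : IsMultiplicationModule R M) {P : Ideal R} (hP : P.IsMaximal)
    (hPM : P • (⊤ : Submodule R M) ≠ ⊤) : IsCoatom (P • (⊤ : Submodule R M)) := by
  constructor
  · exact hPM
  · intro N hN
    obtain ⟨I, hI⟩ := hM N
    by_cases hIP : I ≤ P
    · exact absurd (hI ▸ Submodule.smul_mono_left hIP) (not_le_of_gt hN)
    · have hsup : I ⊔ P = ⊤ := hP.out.2 (I ⊔ P)
        (lt_of_le_of_ne le_sup_right (fun h => hIP (h ▸ le_sup_left)))
      calc N = I • ⊤ ⊔ P • ⊤ := by rw [← hI]; exact (sup_eq_left.mpr hN.le).symm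
        _ = (I ⊔ P) • ⊤ := (Submodule.sup_smul I P ⊤).symm
        _ = ⊤ := by rw [hsup, Submodule.top_smul]

theorem stmt_9 (R : Type*) [CommRing R] (M : Type*) [AddCommGroup M] [Module R M]
    [Nontrivial M] (hM : IsMultiplicationModule R M) :
    sInf {N : Submodule R M | IsCoatom N} =
      (sInf {P : Ideal R | P.IsMaximal ∧ P • (⊤ : Submodule R M) ≠ ⊤}) •
        (⊤ : Submodule R M) := by
  apply le_antisymm
  · -- J ≤ (sInf S) • ⊤
    obtain ⟨I, hI⟩ := hM (sInf {N : Submodule R M | IsCoatom N})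
    rw [hI]
    apply Submodule.smul_mono_left
    apply le_sInf
    rintro P ⟨hPmax, hPM⟩
    by_contra hIP
    have hIP' : ¬ I ≤ P := hIP
    have hsup : I ⊔ P = ⊤ := hPmax.out.2 (I ⊔ P)
      (lt_of_le_of_ne le_sup_right (fun h => hIP' (h ▸ le_sup_left)))
    have hJle : (sInf {N : Submodule R M | IsCoatom N}) ≤ P • ⊤ :=
      sInf_le (isCoatom_smul_top hM hPmax hPM)
    have : (⊤ : Submodule R M) = P • ⊤ := by
      calc (⊤ : Submodule R M) = (I ⊔ P) • ⊤ := by rw [hsup, Submodule.top_smul]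
        _ = I • ⊤ ⊔ P • ⊤ := Submodule.sup_smul I P ⊤
        _ = P • ⊤ := by rw [← hI]; exact sup_eq_right.mpr hJle
    exact hPM this.symm
  · -- (sInf S) • ⊤ ≤ J
    apply le_sInf
    intro N hN
    obtain ⟨hmax, heq⟩ := coatom_eq_colon_smul hM hN
    have hne : (N.colon ⊤) • (⊤ : Submodule R M) ≠ ⊤ := by rw [heq]; exact hN.1
    calc (sInf {P : Ideal R | P.IsMaximal ∧ P • (⊤ : Submodule R M) ≠ ⊤}) • (⊤ : Submodule R M)
        ≤ (N.colon ⊤) • ⊤ := Submodule.smul_mono_left (sInf_le ⟨hmax, hne⟩)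
      _ = N := heq
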